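/- For every γ > 0, every a > 0, and every natural number n, there exists a unique real λ in the open interval (nπ/γ, (n + 1/2)π/γ) such that λ·sin(λγ) = a·cos(λγ). -/

import Mathlib

open Real Set

lemma aux_cos_ne (n : ℕ) {x : ℝ} (h1 : (n:ℝ)*π < x) (h2 : x < (n:ℝ)*π + π/2) :
    Real.cos x ≠ 0 := by
  rw [Real.cos_ne_zero_iff]
  intro k hk
  have hπ : (0:ℝ) < π := Real.pi_pos
  rw [hk] at h1 h2
  have i1 : (2*(n:ℝ)) * π < (2*(k:ℝ)+1) * π := by linarith
  have i2 : (2*(k:ℝ)+1) * π < (2*(n:ℝ)+1) * π := by linarith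
  have j1 : (2*(n:ℝ)) < 2*(k:ℝ)+1 := lt_of_mul_lt_mul_right i1 hπ.le
  have j2 : (2*(k:ℝ)+1) < 2*(n:ℝ)+1 := lt_of_mul_lt_mul_right i2 hπ.le
  have j1' : (2*(n:ℤ)) < 2*k+1 := by exact_mod_cast j1
  have j2' : (2*(k:ℤ)+1) < 2*(n:ℤ)+1 := by exact_mod_cast j2
  omega

lemma aux_tan_shift (n : ℕ) (x : ℝ) : Real.tan x = Real.tan (x - (n:ℝ)*π) := by
  have := (Real.tan_periodic.nat_mul n).sub_eq x
  rw [this]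

lemma aux_tan_pos (n : ℕ) {x : ℝ} (h1 : (n:ℝ)*π < x) (h2 : x < (n:ℝ)*π + π/2) :
    0 < Real.tan x := by
  rw [aux_tan_shift n x]
  exact Real.tan_pos_of_pos_of_lt_pi_div_two (by linarith) (by linarith)

lemma aux_tan_lt (n : ℕ) {x y : ℝ} (h1 : (n:ℝ)*π < x) (hxy : x < y)
    (h2 : y < (n:ℝ)*π + π/2) : Real.tan x < Real.tan y := by
  rw [aux_tan_shift n x, aux_tan_shift n y]
  exact Real.tan_lt_tan_of_lt_of_lt_pi_div_two (by linarith [Real.pi_pos]) (by linarith)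
    (by linarith)

lemma aux_smono (n : ℕ) {x y : ℝ} (h1 : (n:ℝ)*π < x) (hxy : x < y)
    (h2 : y < (n:ℝ)*π + π/2) : x * Real.tan x < y * Real.tan y := by
  have hx0 : 0 < x := lt_of_le_of_lt (by positivity) h1
  have htx : 0 < Real.tan x := aux_tan_pos n h1 (lt_trans hxy h2)
  have hlt := aux_tan_lt n h1 hxy h2
  nlinarith

lemma aux_exists (n : ℕ) {c : ℝ} (hc : 0 < c) :
    ∃ x ∈ Ioo ((n:ℝ)*π) ((n:ℝ)*π + π/2), x * Real.tan x = c := by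
  have hπ : (0:ℝ) < π := Real.pi_pos
  have hnp : (0:ℝ) < (n:ℝ)*π + π/2 := by positivity
  have hn0 : (0:ℝ) ≤ (n:ℝ)*π := by positivity
  obtain ⟨ε, hε⟩ : ∃ ε : ℝ, ε = c / (2*((n:ℝ)*π + π/2)) := ⟨_, rfl⟩
  obtain ⟨M, hM⟩ : ∃ M : ℝ, M = 4*c/π + 1 := ⟨_, rfl⟩
  have hcπ : 0 < 4*c/π := by positivity
  have hε0 : 0 < ε := by rw [hε]; positivity
  have hM1 : 1 < M := by rw [hM]; linarith
  have hM4 : 4*c/π < M := by rw [hM]; linarith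
  have hεM : ε < M := by
    have h1 : ε ≤ c/π := by
      rw [hε]
      apply div_le_div_of_nonneg_left hc.le (by positivity)
      linarith
    have h2 : c/π < 4*c/π := by
      have : 0 < c/π := by positivity
      calc c/π < 4*(c/π) := by linarith
        _ = 4*c/π := by ring
    linarith
  obtain ⟨s, hs⟩ : ∃ s : ℝ, s = Real.arctan ε := ⟨_, rfl⟩
  obtain ⟨t, ht⟩ : ∃ t : ℝ, t = Real.arctan M := ⟨_, rfl⟩
  have hs0 : 0 < s := by
    have := Real.arctan_strictMono hε0
    rwa [Real.arctan_zero, ← hs] at this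
  have hst : s < t := by
    have := Real.arctan_strictMono hεM
    rwa [← hs, ← ht] at this
  have hs2 : s < π/2 := hs ▸ Real.arctan_lt_pi_div_two ε
  have ht2 : t < π/2 := ht ▸ Real.arctan_lt_pi_div_two M
  have htq : π/4 < t := by
    have := Real.arctan_strictMono hM1
    rwa [Real.arctan_one, ← ht] at this
  have htans : Real.tan ((n:ℝ)*π + s) = ε := by
    rw [aux_tan_shift n]
    have h : (n:ℝ)*π + s - (n:ℝ)*π = s := by ring
    rw [h, hs, Real.tan_arctan]
  have htant : Real.tan ((n:ℝ)*π + t) = M := by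
    rw [aux_tan_shift n]
    have h : (n:ℝ)*π + t - (n:ℝ)*π = t := by ring
    rw [h, ht, Real.tan_arctan]
  have hFle : ((n:ℝ)*π + s) * Real.tan ((n:ℝ)*π + s) ≤ c/2 := by
    rw [htans]
    calc ((n:ℝ)*π + s) * ε ≤ ((n:ℝ)*π + π/2) * ε := by nlinarith
      _ = c/2 := by rw [hε]; field_simp
  have hFge : c < ((n:ℝ)*π + t) * Real.tan ((n:ℝ)*π + t) := by
    rw [htant]
    have h1 : t * M ≤ ((n:ℝ)*π + t) * M := by nlinarith
    have h2 : π/4 * (4*c/π) < t * M :=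
      mul_lt_mul'' htq hM4 (by positivity) (by positivity)
    have h3 : π/4 * (4*c/π) = c := by field_simp
    linarith
  have hsub : Icc ((n:ℝ)*π + s) ((n:ℝ)*π + t) ⊆ Ioo ((n:ℝ)*π) ((n:ℝ)*π + π/2) := by
    intro z hz
    exact ⟨by linarith [hz.1], by linarith [hz.2]⟩
  have hcont : ContinuousOn (fun x => x * Real.tan x) (Icc ((n:ℝ)*π + s) ((n:ℝ)*π + t)) := by
    intro z hz
    have hz' := hsub hz
    exact (continuousAt_id.mul (Real.continuousAt_tan.2 (aux_cos_ne n hz'.1 hz'.2))).continuousWithinAt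
  have hmem : c ∈ Icc (((n:ℝ)*π + s) * Real.tan ((n:ℝ)*π + s))
      (((n:ℝ)*π + t) * Real.tan ((n:ℝ)*π + t)) := ⟨by linarith, hFge.le⟩
  obtain ⟨x, hx, hfx⟩ := intermediate_value_Icc (by linarith : (n:ℝ)*π + s ≤ (n:ℝ)*π + t)
    hcont hmem
  exact ⟨x, hsub hx, hfx⟩

theorem stmt_13 (γ : ℝ) (hγ : 0 < γ) (a : ℝ) (ha : 0 < a) (n : ℕ) :
    ∃! l : ℝ, l ∈ Ioo ((n : ℝ) * π / γ) (((n : ℝ) + 1/2) * π / γ) ∧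
      l * Real.sin (l * γ) = a * Real.cos (l * γ) := by
  have hπ : (0:ℝ) < π := Real.pi_pos
  -- translate membership
  have hmem_iff : ∀ l : ℝ, l ∈ Ioo ((n : ℝ) * π / γ) (((n : ℝ) + 1/2) * π / γ) ↔
      l * γ ∈ Ioo ((n:ℝ)*π) ((n:ℝ)*π + π/2) := by
    intro l
    constructor
    · rintro ⟨h1, h2⟩
      constructor
      · calc (n:ℝ)*π = ((n:ℝ)*π/γ) * γ := by field_simp
          _ < l * γ := by exact mul_lt_mul_of_pos_right h1 hγ
      · calc l * γ < (((n:ℝ)+1/2)*π/γ) * γ := mul_lt_mul_of_pos_right h2 hγ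
          _ = (n:ℝ)*π + π/2 := by field_simp
    · rintro ⟨h1, h2⟩
      constructor
      · rw [div_lt_iff₀ hγ]; linarith
      · rw [lt_div_iff₀ hγ]; linarith
  -- translate the equation (given membership)
  have heq_iff : ∀ l : ℝ, l * γ ∈ Ioo ((n:ℝ)*π) ((n:ℝ)*π + π/2) →
      (l * Real.sin (l * γ) = a * Real.cos (l * γ) ↔
        (l*γ) * Real.tan (l*γ) = a*γ) := by
    intro l hl
    have hcos : Real.cos (l*γ) ≠ 0 := aux_cos_ne n hl.1 hl.2
    rw [Real.tan_eq_sin_div_cos]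
    constructor
    · intro h
      field_simp
      nlinarith [h]
    · intro h
      field_simp at h
      have hγ' := hγ.ne'
      nlinarith [h]
  obtain ⟨x, hx, hfx⟩ := aux_exists n (show 0 < a*γ by positivity)
  refine ⟨x/γ, ⟨?_, ?_⟩, ?_⟩
  · rw [hmem_iff]
    rwa [div_mul_cancel₀ _ hγ.ne']
  · rw [heq_iff _ (by rwa [div_mul_cancel₀ _ hγ.ne']), div_mul_cancel₀ _ hγ.ne']
    exact hfx
  · rintro l ⟨hl, heq⟩
    have hl' := (hmem_iff l).1 hl
    have heq' := (heq_iff l hl').1 heq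
    have hxne : (l*γ) = x := by
      by_contra hne
      rcases lt_or_gt_of_ne hne with h | h
      · have := aux_smono n hl'.1 h hx.2
        rw [heq', hfx] at this; exact lt_irrefl _ this
      · have := aux_smono n hx.1 h hl'.2
        rw [heq', hfx] at this; exact lt_irrefl _ this
    field_simp [hxne.symm]
    exact hxne
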